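/- Let ι be the ring automorphism of R[Q_1,…,Q_{n-1}][z_1^{±1},…,z_n^{±1}] determined by ι(z_i) = z_{n-i+1}^{-1} and ι(Q_i) = Q_{n-i}, fixing R pointwise after the substitution ι(e^{a_i}) = e^{-a_{n-i+1}}. Let F_i^{(n)}(z,Q) = Σ_{J⊆{1,…,n},|J|=i} ∏_{j∈J,j+1∉J}(1-Q_j) ∏_{j∈J} z_j. Then z_1⋯z_n · ι(F_i^{(n)}) = F_{n-i}^{(n)} for 1 ≤ i ≤ n-1. -/

import Mathlib

/-- The conserved quantity
`F_i^{(n)}(z,Q) = Σ_{J ⊆ {1,…,n}, |J|=i} ∏_{j∈J, j+1∉J} (1-Q_j) ∏_{j∈J} z_j`. -/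
noncomputable def todaF {K : Type*} [Field K] (n : ℕ) (z Q : ℕ → K) (i : ℕ) : K :=
  ∑ J ∈ (Finset.Icc 1 n).powersetCard i,
    (∏ j ∈ J.filter (fun j => j + 1 ∉ J), (1 - Q j)) * ∏ j ∈ J, z j

open Finset in
/-- The complementation-reflection map `J ↦ { n+1-j : j ∉ J }`. -/
noncomputable def todaRefl (n : ℕ) (J : Finset ℕ) : Finset ℕ :=
  (Finset.Icc 1 n \ J).image (fun j => n + 1 - j)

lemma mem_todaRefl {n : ℕ} {J : Finset ℕ} (hJ : J ⊆ Finset.Icc 1 n) (k : ℕ) :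
    k ∈ todaRefl n J ↔ k ∈ Finset.Icc 1 n ∧ n + 1 - k ∉ J := by
  simp only [todaRefl, Finset.mem_image, Finset.mem_sdiff, Finset.mem_Icc]
  constructor
  · rintro ⟨j, ⟨⟨h1, h2⟩, hj⟩, rfl⟩
    have h : n + 1 - (n + 1 - j) = j := by omega
    exact ⟨⟨by omega, by omega⟩, by rw [h]; exact hj⟩
  · rintro ⟨⟨h1, h2⟩, hk⟩
    exact ⟨n + 1 - k, ⟨⟨by omega, by omega⟩, hk⟩, by omega⟩

lemma todaRefl_subset {n : ℕ} {J : Finset ℕ} (hJ : J ⊆ Finset.Icc 1 n) :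
    todaRefl n J ⊆ Finset.Icc 1 n := fun k hk => ((mem_todaRefl hJ k).1 hk).1

lemma todaRefl_todaRefl {n : ℕ} {J : Finset ℕ} (hJ : J ⊆ Finset.Icc 1 n) :
    todaRefl n (todaRefl n J) = J := by
  ext k
  rw [mem_todaRefl (todaRefl_subset hJ)]
  constructor
  · rintro ⟨hk, hk2⟩
    rw [mem_todaRefl hJ] at hk2
    push_neg at hk2
    rw [Finset.mem_Icc] at hk
    have h1 : n + 1 - k ∈ Finset.Icc 1 n := by rw [Finset.mem_Icc]; omega
    have h2 : n + 1 - (n + 1 - k) = k := by omega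
    have := hk2 h1
    rwa [h2] at this
  · intro hk
    have hk' := hJ hk
    rw [Finset.mem_Icc] at hk'
    refine ⟨by rw [Finset.mem_Icc]; omega, ?_⟩
    rw [mem_todaRefl hJ]
    push_neg
    intro _
    have h2 : n + 1 - (n + 1 - k) = k := by omega
    rw [h2]
    exact hk

lemma todaRefl_card {n : ℕ} {J : Finset ℕ} (hJ : J ⊆ Finset.Icc 1 n) :
    (todaRefl n J).card = n - J.card := by
  have hinj : Set.InjOn (fun j => n + 1 - j) (Finset.Icc 1 n \ J : Finset ℕ) := by
    intro a ha b hb hab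
    simp only [Finset.coe_sdiff, Set.mem_diff, Finset.mem_coe, Finset.mem_Icc] at ha hb
    simp only at hab
    omega
  rw [todaRefl, Finset.card_image_of_injOn hinj, Finset.card_sdiff_of_subset hJ, Nat.card_Icc]
  omega

theorem stmt16 {K : Type*} [Field K] (n i : ℕ) (hi1 : 1 ≤ i) (hin : i ≤ n - 1)
    (z Q : ℕ → K) (hz : ∀ j, 1 ≤ j → j ≤ n → z j ≠ 0)
    (hQ0 : Q 0 = 0) (hQn : Q n = 0) :
    (∏ j ∈ Finset.Icc 1 n, z j) *
        todaF n (fun j => (z (n - j + 1))⁻¹) (fun j => Q (n - j)) i =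
      todaF n z Q (n - i) := by
  classical
  have hn : 2 ≤ n := by omega
  unfold todaF
  rw [Finset.mul_sum]
  refine Finset.sum_nbij' (i := fun J => todaRefl n J) (j := fun J => todaRefl n J)
    ?_ ?_ ?_ ?_ ?_
  · intro J hJ
    rw [Finset.mem_powersetCard] at hJ ⊢
    exact ⟨todaRefl_subset hJ.1, by rw [todaRefl_card hJ.1, hJ.2]⟩
  · intro J hJ
    rw [Finset.mem_powersetCard] at hJ ⊢
    refine ⟨todaRefl_subset hJ.1, by rw [todaRefl_card hJ.1, hJ.2]; omega⟩
  · intro J hJ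
    exact todaRefl_todaRefl (Finset.mem_powersetCard.1 hJ).1
  · intro J hJ
    exact todaRefl_todaRefl (Finset.mem_powersetCard.1 hJ).1
  · intro J hJmem
    rw [Finset.mem_powersetCard] at hJmem
    obtain ⟨hJ, -⟩ := hJmem
    set Kc := todaRefl n J with hKc
    have hKsub : Kc ⊆ Finset.Icc 1 n := todaRefl_subset hJ
    -- the z-product part
    have hcompl : Finset.Icc 1 n \ Kc = J.image (fun j => n + 1 - j) := by
      ext m
      rw [Finset.mem_sdiff, hKc, mem_todaRefl hJ, Finset.mem_image]
      constructor
      · rintro ⟨hm, hm2⟩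
        push_neg at hm2
        have := hm2 hm
        rw [Finset.mem_Icc] at hm
        exact ⟨n + 1 - m, this, by omega⟩
      · rintro ⟨j, hj, rfl⟩
        have hj' := hJ hj
        rw [Finset.mem_Icc] at hj'
        have h2 : n + 1 - (n + 1 - j) = j := by omega
        refine ⟨by rw [Finset.mem_Icc]; omega, ?_⟩
        push_neg
        intro _
        rw [h2]
        exact hj
    have hzprod : (∏ j ∈ J, (z (n - j + 1))⁻¹) = (∏ m ∈ Finset.Icc 1 n \ Kc, z m)⁻¹ := by
      rw [hcompl, Finset.prod_image, ← Finset.prod_inv_distrib]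
      · apply Finset.prod_congr rfl
        intro j hj
        have hj' := hJ hj
        rw [Finset.mem_Icc] at hj'
        congr 2
        omega
      · intro a ha b hb hab
        have ha' := hJ ha; have hb' := hJ hb
        rw [Finset.mem_Icc] at ha' hb'
        simp only at hab
        omega
    have hsd : (∏ m ∈ Finset.Icc 1 n \ Kc, z m) * (∏ m ∈ Kc, z m)
        = ∏ m ∈ Finset.Icc 1 n, z m := Finset.prod_sdiff hKsub
    have hne : (∏ m ∈ Finset.Icc 1 n \ Kc, z m) ≠ 0 := by
      apply Finset.prod_ne_zero_iff.2
      intro m hm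
      rw [Finset.mem_sdiff, Finset.mem_Icc] at hm
      exact hz m hm.1.1 hm.1.2
    -- the Q-product part
    have hQprod : (∏ j ∈ J.filter (fun j => j + 1 ∉ J), (1 - Q (n - j)))
        = ∏ k ∈ Kc.filter (fun k => k + 1 ∉ Kc), (1 - Q k) := by
      rw [← Finset.prod_filter_of_ne (p := fun j => j ≠ n)
          (s := J.filter (fun j => j + 1 ∉ J)) (f := fun j => 1 - Q (n - j))
          (by intro x hx hx1; intro hxn; apply hx1; rw [hxn]; simp [hQ0]),
        ← Finset.prod_filter_of_ne (p := fun k => k ≠ n)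
          (s := Kc.filter (fun k => k + 1 ∉ Kc)) (f := fun k => 1 - Q k)
          (by intro x hx hx1; intro hxn; apply hx1; rw [hxn]; simp [hQn])]
      refine Finset.prod_nbij' (i := fun j => n - j) (j := fun k => n - k) ?_ ?_ ?_ ?_ ?_
      · intro j hj
        simp only [Finset.mem_filter] at hj ⊢
        obtain ⟨⟨hjJ, hj1⟩, hjn⟩ := hj
        have hj' := hJ hjJ
        rw [Finset.mem_Icc] at hj'
        refine ⟨⟨?_, ?_⟩, by omega⟩
        · rw [hKc, mem_todaRefl hJ]
          have : n + 1 - (n - j) = j + 1 := by omega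
          rw [this]
          exact ⟨by rw [Finset.mem_Icc]; omega, hj1⟩
        · rw [hKc, mem_todaRefl hJ]
          push_neg
          intro _
          have : n + 1 - (n - j + 1) = j := by omega
          rw [this]
          exact hjJ
      · intro k hk
        simp only [Finset.mem_filter] at hk ⊢
        obtain ⟨⟨hkK, hk1⟩, hkn⟩ := hk
        rw [hKc, mem_todaRefl hJ] at hkK hk1
        obtain ⟨hkI, hkJ⟩ := hkK
        rw [Finset.mem_Icc] at hkI
        push_neg at hk1
        have hk1' := hk1 (by rw [Finset.mem_Icc]; omega)
        have h1 : n + 1 - (k + 1) = n - k := by omega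
        rw [h1] at hk1'
        refine ⟨⟨hk1', ?_⟩, by omega⟩
        have h2 : n - k + 1 = n + 1 - k := by omega
        rw [h2]
        exact hkJ
      · intro j hj
        simp only [Finset.mem_filter] at hj
        have := hJ hj.1.1
        rw [Finset.mem_Icc] at this
        show n - (n - j) = j
        omega
      · intro k hk
        simp only [Finset.mem_filter] at hk
        have := hKsub hk.1.1
        rw [Finset.mem_Icc] at this
        show n - (n - k) = k
        omega
      · intro j hj
        rfl
    -- put everything together
    rw [hzprod, hQprod]
    show _ = (∏ j ∈ Finset.filter (fun j => j + 1 ∉ Kc) Kc, (1 - Q j)) * ∏ j ∈ Kc, z j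
    rw [← hsd]
    field_simp
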